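/- arXiv:1509.08269 — 5 statements merged into one kernel-verified Lean document; each statement's English description precedes it below -/
import Mathlib

section
/- Let $\nabla R$ be an algebraic covariant derivative of a curvature tensor on a real vector space $V$, i.e. $\nabla_x R$ is an algebraic curvature tensor for each $x$ and the second Bianchi identity holds. Then applying the Young symmetrizer for the tableau with rows $(1,3)$, $(2,4)$ (in the variables $x_1,x_2,x_3,x_4$, keeping $x_5$ fixed) to the function $(x_1,x_2,x_3,x_4) \mapsto \nabla_{x_1}R(x_3,x_2,x_5,x_4)$ yields $6\,\nabla_{x_5}R(x_1,x_2,x_3,x_4)$. -/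
/-- Lemma on the case k = 1: applying the Young symmetrizer for the tableau
with rows (1,3), (2,4) to `(x1,x2,x3,x4) ↦ ∇_{x1}R(x3,x2,x5,x4)` (keeping x5 fixed)
yields `6 ∇_{x5}R(x1,x2,x3,x4)`. -/
theorem young_symmetrizer_nablaR (V : Type*) [AddCommGroup V] [Module ℝ V]
    (D : V → V → V → V → V → ℝ)
    (hanti : ∀ x a b c d, D x a b c d = - D x b a c d)
    (hpair : ∀ x a b c d, D x a b c d = D x c d a b)
    (hb1 : ∀ x a b c y, D x a b c y + D x b c a y + D x c a b y = 0)
    (hb2 : ∀ x1 x2 x3 y1 y2,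
      D x1 x2 x3 y1 y2 + D x2 x3 x1 y1 y2 + D x3 x1 x2 y1 y2 = 0) :
    ∀ x1 x2 x3 x4 x5,
      (fun tp : V → V → V → V → ℝ =>
          tp x1 x2 x3 x4 - tp x2 x1 x3 x4 - tp x1 x2 x4 x3 + tp x2 x1 x4 x3)
        (fun a b c d =>
          (fun p : V → V → V → V → ℝ => p a b c d + p c b a d + p a d c b + p c d a b)
          (fun y1 y2 y3 y4 => D y1 y3 y2 x5 y4))
      = 6 * D x5 x1 x2 x3 x4 := by
  intro x1 x2 x3 x4 x5
  simp only []
  linear_combination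
      (1 : ℝ) * (hanti x1 x2 x3 x5 x4) +
      (-4 : ℝ) * (hanti x1 x2 x4 x3 x5) +
      (-1 : ℝ) * (hanti x1 x2 x4 x5 x3) +
      (2 : ℝ) * (hanti x1 x2 x5 x3 x4) +
      (-1 : ℝ) * (hanti x1 x3 x4 x5 x2) +
      (1 : ℝ) * (hanti x1 x3 x5 x2 x4) +
      (-1 : ℝ) * (hanti x1 x4 x5 x2 x3) +
      (3 : ℝ) * (hanti x2 x1 x3 x4 x5) +
      (-1 : ℝ) * (hanti x2 x1 x3 x5 x4) +
      (1 : ℝ) * (hanti x2 x1 x4 x3 x5) +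
      (1 : ℝ) * (hanti x2 x1 x4 x5 x3) +
      (4 : ℝ) * (hanti x2 x1 x5 x3 x4) +
      (1 : ℝ) * (hanti x2 x3 x4 x5 x1) +
      (-1 : ℝ) * (hanti x2 x3 x5 x1 x4) +
      (1 : ℝ) * (hanti x2 x4 x5 x1 x3) +
      (-1 : ℝ) * (hanti x3 x1 x2 x5 x4) +
      (-1 : ℝ) * (hanti x3 x1 x4 x2 x5) +
      (-1 : ℝ) * (hanti x3 x1 x5 x2 x4) +
      (1 : ℝ) * (hanti x3 x2 x5 x1 x4) +
      (2 : ℝ) * (hanti x3 x4 x5 x1 x2) +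
      (1 : ℝ) * (hanti x4 x1 x2 x5 x3) +
      (1 : ℝ) * (hanti x4 x1 x3 x2 x5) +
      (1 : ℝ) * (hanti x4 x1 x5 x2 x3) +
      (-1 : ℝ) * (hanti x4 x2 x5 x1 x3) +
      (-2 : ℝ) * (hanti x4 x3 x5 x1 x2) +
      (-1 : ℝ) * (hpair x1 x2 x3 x4 x5) +
      (-1 : ℝ) * (hpair x1 x2 x3 x5 x4) +
      (1 : ℝ) * (hpair x1 x2 x4 x3 x5) +
      (1 : ℝ) * (hpair x1 x2 x4 x5 x3) +
      (4 : ℝ) * (hpair x1 x2 x5 x3 x4) +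
      (2 : ℝ) * (hpair x1 x3 x4 x5 x2) +
      (1 : ℝ) * (hpair x2 x1 x3 x4 x5) +
      (1 : ℝ) * (hpair x2 x1 x3 x5 x4) +
      (-1 : ℝ) * (hpair x2 x1 x4 x3 x5) +
      (-1 : ℝ) * (hpair x2 x1 x4 x5 x3) +
      (-4 : ℝ) * (hpair x2 x1 x5 x3 x4) +
      (-2 : ℝ) * (hpair x2 x3 x4 x5 x1) +
      (2 : ℝ) * (hpair x3 x1 x2 x4 x5) +
      (2 : ℝ) * (hpair x3 x1 x2 x5 x4) +
      (1 : ℝ) * (hpair x3 x1 x4 x2 x5) +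
      (1 : ℝ) * (hpair x3 x1 x4 x5 x2) +
      (1 : ℝ) * (hpair x3 x1 x5 x2 x4) +
      (-1 : ℝ) * (hpair x3 x2 x4 x5 x1) +
      (-2 : ℝ) * (hpair x4 x1 x2 x3 x5) +
      (-2 : ℝ) * (hpair x4 x1 x2 x5 x3) +
      (-1 : ℝ) * (hpair x4 x1 x3 x2 x5) +
      (-1 : ℝ) * (hpair x4 x1 x3 x5 x2) +
      (-1 : ℝ) * (hpair x4 x1 x5 x2 x3) +
      (1 : ℝ) * (hpair x4 x2 x3 x5 x1) +
      (4 : ℝ) * (hb1 x1 x2 x3 x4 x5) +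
      (-4 : ℝ) * (hb1 x2 x1 x3 x4 x5) +
      (1 : ℝ) * (hb1 x3 x1 x2 x4 x5) +
      (-1 : ℝ) * (hb1 x4 x1 x2 x3 x5) +
      (-3 : ℝ) * (hb2 x1 x2 x3 x4 x5) +
      (3 : ℝ) * (hb2 x1 x2 x4 x3 x5) +
      (-6 : ℝ) * (hb2 x1 x2 x5 x3 x4)
end

section
/- Let $\nabla R$ be an algebraic covariant derivative of a curvature tensor on a real vector space $V$. Then the Young symmetrizer for the shape-$(3,2)$ tableau with rows $(1,3,5)$ and $(2,4)$ applied to $(x_1,\ldots,x_5) \mapsto \nabla_{x_5}R(x_1,x_2,x_3,x_4)$ equals $24\,\nabla_{x_5}R(x_1,x_2,x_3,x_4)$. -/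
private lemma sum2' (f : Equiv.Perm (Fin 2) → ℝ) :
    ∑ τ : Equiv.Perm (Fin 2), f τ = f 1 + f (Equiv.swap 0 1) := by
  rw [show (Finset.univ : Finset (Equiv.Perm (Fin 2))) = {1, Equiv.swap 0 1} from by decide]
  rw [Finset.sum_insert (by decide), Finset.sum_singleton]

private lemma sum3' (f : Equiv.Perm (Fin 3) → ℝ) : ∑ σ : Equiv.Perm (Fin 3), f σ =
    f 1 + f (Equiv.swap 0 1) + f (Equiv.swap 0 2) + f (Equiv.swap 1 2)
      + f (Equiv.swap 0 1 * Equiv.swap 1 2) + f (Equiv.swap 1 2 * Equiv.swap 0 1) := by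
  rw [show (Finset.univ : Finset (Equiv.Perm (Fin 3))) = {1, Equiv.swap 0 1, Equiv.swap 0 2,
    Equiv.swap 1 2, Equiv.swap 0 1 * Equiv.swap 1 2, Equiv.swap 1 2 * Equiv.swap 0 1} from by decide]
  rw [Finset.sum_insert (by decide), Finset.sum_insert (by decide), Finset.sum_insert (by decide),
    Finset.sum_insert (by decide), Finset.sum_insert (by decide), Finset.sum_singleton]
  ring

/-- case k = 1: the Young symmetrizer for the shape-(3,2) tableau with rows
(1,3,5), (2,4) applied to `(x1,…,x5) ↦ ∇_{x5}R(x1,x2,x3,x4)` equals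
`24 ∇_{x5}R(x1,x2,x3,x4)`. Row action: symmetrize over permutations of `{x1,x3,x5}`
(positions 1,3,5) and of `{x2,x4}` (positions 2,4); column action: antisymmetrize in the
pairs (x1,x2) and (x3,x4). -/
theorem young_symmetrizer_nablaR_full (V : Type*) [AddCommGroup V] [Module ℝ V]
    (D : V → V → V → V → V → ℝ)
    (hanti : ∀ x a b c d, D x a b c d = - D x b a c d)
    (hpair : ∀ x a b c d, D x a b c d = D x c d a b)
    (hb1 : ∀ x a b c y, D x a b c y + D x b c a y + D x c a b y = 0)
    (hb2 : ∀ x1 x2 x3 y1 y2,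
      D x1 x2 x3 y1 y2 + D x2 x3 x1 y1 y2 + D x3 x1 x2 y1 y2 = 0) :
    ∀ x1 x2 x3 x4 x5,
      (fun tp : (Fin 3 → V) → (Fin 2 → V) → ℝ =>
          tp ![x1, x3, x5] ![x2, x4] - tp ![x2, x3, x5] ![x1, x4]
            - tp ![x1, x4, x5] ![x2, x3] + tp ![x2, x4, x5] ![x1, x3])
        (fun r c => ∑ σ : Equiv.Perm (Fin 3), ∑ τ : Equiv.Perm (Fin 2),
          -- positions (1,3,5) carry r∘σ, positions (2,4) carry c∘τ, and the function is
          -- p(y1,…,y5) = ∇_{y5}R(y1,y2,y3,y4)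
          D (r (σ 2)) (r (σ 0)) (c (τ 0)) (r (σ 1)) (c (τ 1)))
      = 24 * D x5 x1 x2 x3 x4 := by
  intro x1 x2 x3 x4 x5
  simp only [sum3', sum2', Equiv.Perm.one_apply, Equiv.Perm.mul_apply, Equiv.swap_apply_def]
  simp (config := { decide := true }) only [Matrix.cons_val_zero, Matrix.cons_val_one,
    Matrix.head_cons, Matrix.cons_val_two, Matrix.tail_cons, if_true, if_false]
  linear_combination
    (1 : ℝ) * (hanti x1 x2 x3 x4 x5) +
    (-1 : ℝ) * (hpair x1 x2 x3 x4 x5) +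
    (6 : ℝ) * (hb1 x1 x2 x3 x4 x5) +
    (-6 : ℝ) * (hanti x1 x2 x4 x3 x5) +
    (-1 : ℝ) * (hanti x1 x2 x4 x5 x3) +
    (2 : ℝ) * (hpair x1 x2 x4 x5 x3) +
    (-1 : ℝ) * (hb1 x1 x2 x4 x5 x3) +
    (4 : ℝ) * (hanti x1 x2 x5 x3 x4) +
    (6 : ℝ) * (hpair x1 x2 x5 x3 x4) +
    (2 : ℝ) * (hb1 x1 x2 x5 x3 x4) +
    (-1 : ℝ) * (hpair x1 x3 x2 x4 x5) +
    (-1 : ℝ) * (hpair x1 x3 x2 x5 x4) +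
    (-1 : ℝ) * (hanti x1 x3 x4 x5 x2) +
    (3 : ℝ) * (hpair x1 x3 x4 x5 x2) +
    (-1 : ℝ) * (hb1 x1 x3 x4 x5 x2) +
    (5 : ℝ) * (hanti x2 x1 x3 x4 x5) +
    (1 : ℝ) * (hpair x2 x1 x3 x4 x5) +
    (-6 : ℝ) * (hb1 x2 x1 x3 x4 x5) +
    (1 : ℝ) * (hanti x2 x1 x4 x5 x3) +
    (-2 : ℝ) * (hpair x2 x1 x4 x5 x3) +
    (1 : ℝ) * (hb1 x2 x1 x4 x5 x3) +
    (8 : ℝ) * (hanti x2 x1 x5 x3 x4) +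
    (-6 : ℝ) * (hpair x2 x1 x5 x3 x4) +
    (-2 : ℝ) * (hb1 x2 x1 x5 x3 x4) +
    (1 : ℝ) * (hpair x2 x3 x1 x4 x5) +
    (1 : ℝ) * (hpair x2 x3 x1 x5 x4) +
    (1 : ℝ) * (hanti x2 x3 x4 x5 x1) +
    (-3 : ℝ) * (hpair x2 x3 x4 x5 x1) +
    (1 : ℝ) * (hb1 x2 x3 x4 x5 x1) +
    (6 : ℝ) * (hb1 x3 x1 x2 x4 x5) +
    (-4 : ℝ) * (hanti x3 x1 x2 x5 x4) +
    (-1 : ℝ) * (hpair x3 x1 x2 x5 x4) +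
    (6 : ℝ) * (hb1 x3 x1 x2 x5 x4) +
    (-6 : ℝ) * (hanti x3 x1 x4 x2 x5) +
    (6 : ℝ) * (hpair x3 x1 x4 x2 x5) +
    (1 : ℝ) * (hpair x3 x1 x4 x5 x2) +
    (-8 : ℝ) * (hanti x3 x1 x5 x2 x4) +
    (6 : ℝ) * (hpair x3 x1 x5 x2 x4) +
    (2 : ℝ) * (hb1 x3 x1 x5 x2 x4) +
    (1 : ℝ) * (hpair x3 x2 x1 x5 x4) +
    (-1 : ℝ) * (hpair x3 x2 x4 x5 x1) +
    (-6 : ℝ) * (hb1 x4 x1 x2 x3 x5) +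
    (4 : ℝ) * (hanti x4 x1 x2 x5 x3) +
    (1 : ℝ) * (hpair x4 x1 x2 x5 x3) +
    (-6 : ℝ) * (hb1 x4 x1 x2 x5 x3) +
    (6 : ℝ) * (hanti x4 x1 x3 x2 x5) +
    (-6 : ℝ) * (hpair x4 x1 x3 x2 x5) +
    (-1 : ℝ) * (hpair x4 x1 x3 x5 x2) +
    (8 : ℝ) * (hanti x4 x1 x5 x2 x3) +
    (-6 : ℝ) * (hpair x4 x1 x5 x2 x3) +
    (-2 : ℝ) * (hb1 x4 x1 x5 x2 x3) +
    (-1 : ℝ) * (hpair x4 x2 x1 x5 x3) +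
    (1 : ℝ) * (hpair x4 x2 x3 x5 x1) +
    (-4 : ℝ) * (hanti x5 x1 x2 x3 x4) +
    (-2 : ℝ) * (hpair x5 x1 x2 x3 x4) +
    (-5 : ℝ) * (hb1 x5 x1 x2 x3 x4) +
    (3 : ℝ) * (hanti x5 x1 x2 x4 x3) +
    (1 : ℝ) * (hpair x5 x1 x2 x4 x3) +
    (-5 : ℝ) * (hb1 x5 x1 x2 x4 x3) +
    (4 : ℝ) * (hanti x5 x1 x3 x2 x4) +
    (-5 : ℝ) * (hpair x5 x1 x3 x2 x4) +
    (1 : ℝ) * (hb1 x5 x1 x3 x2 x4) +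
    (-1 : ℝ) * (hb1 x5 x1 x3 x4 x2) +
    (6 : ℝ) * (hanti x5 x1 x4 x2 x3) +
    (-5 : ℝ) * (hpair x5 x1 x4 x2 x3) +
    (-1 : ℝ) * (hb1 x5 x1 x4 x2 x3) +
    (1 : ℝ) * (hanti x5 x1 x4 x3 x2) +
    (2 : ℝ) * (hpair x5 x2 x1 x3 x4) +
    (-1 : ℝ) * (hpair x5 x2 x1 x4 x3) +
    (1 : ℝ) * (hb1 x5 x2 x3 x4 x1) +
    (-1 : ℝ) * (hanti x5 x2 x4 x3 x1) +
    (-6 : ℝ) * (hb2 x1 x2 x3 x4 x5) +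
    (6 : ℝ) * (hb2 x1 x2 x4 x3 x5) +
    (-12 : ℝ) * (hb2 x1 x2 x5 x3 x4)
end

section
/- Let $\nabla^{2)}R \in \otimes^6 V^*$ be a linear algebraic curvature $2$-jet component, i.e. for each $x$ the tensor $\nabla^{2)}_{x,\cdot}R$ is an algebraic covariant derivative of a curvature tensor, and $\nabla^{2)}_{x,y}R = \nabla^{2)}_{y,x}R$ for all $x,y$ (Ricci identity with vanishing lower-order terms). Then the Young symmetrizer for the tableau with rows $(1,3)$, $(2,4)$ (keeping $x_5,x_6$ fixed) applied to $(x_1,x_2,x_3,x_4) \mapsto \nabla^{2)}_{x_1,x_3}R(x_5,x_2,x_6,x_4)$ equals $4\,\nabla^{2)}_{x_5,x_6}R(x_1,x_2,x_3,x_4)$. -/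
/-- Lemma for the case k = 2: for a linear algebraic curvature 2-jet
component `T = ∇²R`, the Young symmetrizer for the tableau with rows (1,3), (2,4)
(keeping x5, x6 fixed) applied to `(x1,x2,x3,x4) ↦ ∇²_{x1,x3}R(x5,x2,x6,x4)` equals
`4 ∇²_{x5,x6}R(x1,x2,x3,x4)`. -/
theorem young_symmetrizer_nabla2R (V : Type*) [AddCommGroup V] [Module ℝ V]
    (T : V → V → V → V → V → V → ℝ)
    (hsym : ∀ x y a b c d, T x y a b c d = T y x a b c d)
    (hanti : ∀ x y a b c d, T x y a b c d = - T x y b a c d)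
    (hpair : ∀ x y a b c d, T x y a b c d = T x y c d a b)
    (hb1 : ∀ x y a b c z, T x y a b c z + T x y b c a z + T x y c a b z = 0)
    (hb2 : ∀ x x1 x2 x3 y1 y2,
      T x x1 x2 x3 y1 y2 + T x x2 x3 x1 y1 y2 + T x x3 x1 x2 y1 y2 = 0) :
    ∀ x1 x2 x3 x4 x5 x6,
      (fun tp : V → V → V → V → ℝ =>
          tp x1 x2 x3 x4 - tp x2 x1 x3 x4 - tp x1 x2 x4 x3 + tp x2 x1 x4 x3)
        (fun a b c d =>
          (fun p : V → V → V → V → ℝ => p a b c d + p c b a d + p a d c b + p c d a b)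
          (fun y1 y2 y3 y4 => T y1 y3 x5 y2 x6 y4))
      = 4 * T x5 x6 x1 x2 x3 x4 := by
  intro x1 x2 x3 x4 x5 x6
  beta_reduce
  linear_combination (-2) * hb2 x1 x2 x5 x6 x3 x4 + (2) * hb2 x1 x3 x4 x5 x2 x6 + (2) * hb2 x1 x3 x4 x6 x2 x5 + (2) * hb2 x2 x1 x5 x6 x3 x4 + (-2) * hb2 x2 x3 x4 x5 x1 x6 + (-2) * hb2 x2 x3 x4 x6 x1 x5 + (-4) * hb2 x5 x1 x2 x6 x3 x4 + (2) * hsym x1 x2 x5 x6 x3 x4 + (2) * hanti x1 x3 x2 x5 x6 x4 + (-2) * hpair x1 x3 x2 x5 x6 x4 + (-2) * hanti x1 x3 x2 x6 x4 x5 + (2) * hpair x1 x3 x2 x6 x4 x5 + (2) * hanti x1 x3 x4 x5 x6 x2 + (-2) * hpair x1 x3 x4 x5 x6 x2 + (-2) * hanti x1 x3 x4 x6 x2 x5 + (-1) * hsym x1 x3 x5 x2 x6 x4 + (-1) * hsym x1 x3 x5 x4 x6 x2 + (-2) * hanti x1 x4 x2 x5 x6 x3 + (2) * hpair x1 x4 x2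 x5 x6 x3 + (2) * hanti x1 x4 x2 x6 x3 x5 + (-2) * hpair x1 x4 x2 x6 x3 x5 + (-2) * hanti x1 x4 x3 x5 x2 x6 + (-2) * hanti x1 x4 x3 x5 x6 x2 + (2) * hpair x1 x4 x3 x5 x6 x2 + hsym x1 x4 x5 x2 x6 x3 + hsym x1 x4 x5 x3 x6 x2 + (-4) * hsym x1 x5 x2 x6 x3 x4 + (2) * hanti x1 x5 x2 x6 x3 x4 + (2) * hpair x1 x5 x2 x6 x3 x4 + (2) * hpair x1 x6 x2 x5 x3 x4 + (-2) * hanti x2 x3 x1 x5 x6 x4 + (2) * hpair x2 x3 x1 x5 x6 x4 + (2) * hanti x2 x3 x1 x6 x4 x5 + (-2) * hpair x2 x3 x1 x6 x4 x5 + (-2) * hanti x2 x3 x4 x5 x6 x1 + (2) * hpair x2 x3 x4 x5 x6 x1 + (2) * hanti x2 x3 x4 x6 x1 x5 + hsym x2 x3 x5 x1 x6 x4 + hsym x2 x3 x5 x4 x6 x1 + (2) * hanti x2 x4 x1 x5 x6 x3 + (-2) * hpair x2 x4 x1 x5 x6 x3 + (-2) * hanti x2 x4 x1 x6 x3 x5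 + (2) * hpair x2 x4 x1 x6 x3 x5 + (2) * hanti x2 x4 x3 x5 x1 x6 + (2) * hanti x2 x4 x3 x5 x6 x1 + (-2) * hpair x2 x4 x3 x5 x6 x1 + (-1) * hsym x2 x4 x5 x1 x6 x3 + (-1) * hsym x2 x4 x5 x3 x6 x1 + (2) * hanti x2 x5 x1 x6 x3 x4 + (-2) * hpair x2 x5 x1 x6 x3 x4 + (-4) * hsym x2 x5 x6 x1 x3 x4 + (-2) * hpair x2 x6 x1 x5 x3 x4
end

section
/- Define $\tilde{Q}_k$ in the free associative $\mathbb{R}$-algebra on noncommuting generators $X_2, X_3, \ldots$ by $\tilde{Q}_{-1}=0$, $\tilde{Q}_0=1$, and $\tilde{Q}_k = -\frac{1}{k(k+1)}\sum_{\ell=2}^{k}\binom{k}{\ell}(\ell-1)\ell\, X_\ell \tilde{Q}_{k-\ell}$ for $k \geq 1$. Then for each $k \geq 1$, $\tilde{Q}_k = \sum_{I : \deg(I)=k} \frac{k!}{\Pi_I}\, \tilde{X}_{i_r}\cdots\tilde{X}_{i_1}$, where the sum is over finite sequences $I=(i_1,\ldots,i_r)$ with each $i_j \geq 2$ and $i_1+\cdots+i_r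 = k$, $\tilde{X}_j := -\frac{1}{(j-2)!}X_j$, and $\Pi_I := \prod_{m=1}^r (i_1+\cdots+i_m)(i_1+\cdots+i_m+1)$. -/
open Finset

/-- The rescaled generator `X̃ⱼ = -(1/(j-2)!) Xⱼ` of the free algebra. -/
noncomputable def Xtilde (j : ℕ) : FreeAlgebra ℝ ℕ :=
  (-(1 : ℝ) / (j - 2).factorial) • FreeAlgebra.ι ℝ j

/-- `Π_I = ∏ₘ (i₁+⋯+iₘ)(i₁+⋯+iₘ+1)` for a sequence `I = (i₁,…,i_r)`. -/
def PiI (l : List ℕ) : ℝ :=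
  ∏ m ∈ Finset.range l.length,
    (((l.take (m + 1)).sum : ℝ) * ((l.take (m + 1)).sum + 1))

namespace QtildeAux

noncomputable def S (k : ℕ) : FreeAlgebra ℝ ℕ :=
  ∑ c ∈ Finset.univ.filter (fun c : Composition k => ∀ i ∈ c.blocks, 2 ≤ i),
    ((k.factorial : ℝ) / PiI c.blocks) • (c.blocks.reverse.map Xtilde).prod

lemma S_zero : S 0 = 1 := by
  classical
  have hb : ∀ c : Composition 0, c.blocks = [] := by
    intro c
    have hs := c.blocks_sum
    cases hbl : c.blocks with
    | nil => rfl
    | cons a t =>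
      exfalso
      have hpos := c.blocks_pos (i := a) (by rw [hbl]; exact List.mem_cons_self)
      rw [hbl] at hs
      simp [List.sum_cons] at hs
      omega
  unfold S
  rw [Finset.sum_eq_single_of_mem
    (⟨[], fun h => absurd h List.not_mem_nil, by simp⟩ : Composition 0)]
  · simp [PiI]
  · simp only [Finset.mem_filter, Finset.mem_univ, true_and]
    intro i hi
    exact absurd hi List.not_mem_nil
  · intro b _ hne
    exact (hne (Composition.ext (hb b))).elim

lemma blocks_ne_nil {k : ℕ} (hk : 1 ≤ k) (c : Composition k) : c.blocks ≠ [] := by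
  intro h
  have hs := c.blocks_sum
  rw [h] at hs
  simp at hs
  omega

lemma sum_dropLast {k : ℕ} (hk : 1 ≤ k) (c : Composition k) :
    c.blocks.dropLast.sum + c.blocks.getLast (blocks_ne_nil hk c) = k := by
  have h := List.dropLast_append_getLast (blocks_ne_nil hk c)
  have hs := c.blocks_sum
  calc c.blocks.dropLast.sum + c.blocks.getLast (blocks_ne_nil hk c)
      = (c.blocks.dropLast ++ [c.blocks.getLast (blocks_ne_nil hk c)]).sum := by
        rw [List.sum_append]; simp
    _ = k := by rw [h, hs]

def shorten {k : ℕ} (hk : 1 ≤ k) (c : Composition k) :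
    Composition (k - c.blocks.getLast (blocks_ne_nil hk c)) :=
  ⟨c.blocks.dropLast,
   fun hi => c.blocks_pos ((List.dropLast_sublist _).subset hi),
   by have := sum_dropLast hk c; omega⟩

def extendC {k ℓ : ℕ} (h2 : 2 ≤ ℓ) (hkl : ℓ ≤ k) (c : Composition (k - ℓ)) : Composition k :=
  ⟨c.blocks ++ [ℓ],
   fun hi => by
     rcases List.mem_append.1 hi with h | h
     · exact c.blocks_pos h
     · simp at h; omega,
   by rw [List.sum_append]; simp [c.blocks_sum]; omega⟩

lemma sigma_ext_comp {k a b : ℕ} (h : a = b) (c : Composition (k - a)) (d : Composition (k - b))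
    (hbd : c.blocks = d.blocks) :
    (⟨a, c⟩ : Σ ℓ : ℕ, Composition (k - ℓ)) = ⟨b, d⟩ := by
  subst h
  exact congrArg _ (Composition.ext hbd)

lemma reindex (k : ℕ) (hk : 1 ≤ k) (f : List ℕ → FreeAlgebra ℝ ℕ) :
    (∑ c ∈ Finset.univ.filter (fun c : Composition k => ∀ i ∈ c.blocks, 2 ≤ i), f c.blocks)
      = ∑ p ∈ (Finset.Icc 2 k).sigma
          (fun ℓ => Finset.univ.filter (fun c : Composition (k - ℓ) => ∀ i ∈ c.blocks, 2 ≤ i)),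
          f (p.2.blocks ++ [p.1]) := by
  classical
  refine Finset.sum_bij'
    (fun c hc => (⟨c.blocks.getLast (blocks_ne_nil hk c), shorten hk c⟩ :
        Σ ℓ : ℕ, Composition (k - ℓ)))
    (fun p hp => extendC
      (Finset.mem_Icc.1 (Finset.mem_sigma.1 hp).1).1
      (Finset.mem_Icc.1 (Finset.mem_sigma.1 hp).1).2 p.2)
    ?_ ?_ ?_ ?_ ?_
  · -- hi
    intro c hc
    have hc2 := (Finset.mem_filter.1 hc).2
    rw [Finset.mem_sigma]
    constructor
    · rw [Finset.mem_Icc]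
      constructor
      · exact hc2 _ (List.getLast_mem _)
      · show c.blocks.getLast (blocks_ne_nil hk c) ≤ k
        have := sum_dropLast hk c; omega
    · rw [Finset.mem_filter]
      refine ⟨Finset.mem_univ _, ?_⟩
      intro i hi
      exact hc2 i ((List.dropLast_sublist _).subset hi)
  · -- hj
    intro p hp
    rw [Finset.mem_filter]
    refine ⟨Finset.mem_univ _, ?_⟩
    intro i hi
    rcases List.mem_append.1 hi with h | h
    · exact (Finset.mem_filter.1 (Finset.mem_sigma.1 hp).2).2 i h
    · simp at h
      subst h
      exact (Finset.mem_Icc.1 (Finset.mem_sigma.1 hp).1).1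
  · -- left_inv
    dsimp only
    intro c hc
    apply Composition.ext
    exact List.dropLast_append_getLast _
  · -- right_inv
    intro p hp
    rcases p with ⟨ℓ, c⟩
    apply sigma_ext_comp
    · exact List.getLast_concat
    · exact List.dropLast_concat
  · -- values
    dsimp only
    intro c hc
    exact congrArg f (List.dropLast_append_getLast _).symm

lemma S_reindex (k : ℕ) (hk : 1 ≤ k) :
    S k = ∑ ℓ ∈ Finset.Icc 2 k,
        ∑ c ∈ Finset.univ.filter (fun c : Composition (k - ℓ) => ∀ i ∈ c.blocks, 2 ≤ i),
          ((k.factorial : ℝ) / PiI (c.blocks ++ [ℓ])) •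
            ((c.blocks ++ [ℓ]).reverse.map Xtilde).prod :=
  (reindex k hk
      (fun l => ((k.factorial : ℝ) / PiI l) • (l.reverse.map Xtilde).prod)).trans
    (by rw [Finset.sum_sigma])

lemma PiI_append (l : List ℕ) (ℓ : ℕ) :
    PiI (l ++ [ℓ]) = PiI l * (((l.sum + ℓ : ℕ) : ℝ) * (((l.sum + ℓ : ℕ) : ℝ) + 1)) := by
  unfold PiI
  rw [List.length_append]
  simp only [List.length_singleton]
  rw [Finset.prod_range_succ]
  congr 1
  · apply Finset.prod_congr rfl
    intro m hm
    have := Finset.mem_range.1 hm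
    rw [List.take_append_of_le_length (by omega : m + 1 ≤ l.length)]
  · have h : (l ++ [ℓ]).take (l.length + 1) = l ++ [ℓ] :=
      List.take_of_length_le (by simp)
    rw [h, List.sum_append]
    push_cast
    simp

lemma ι_eq (ℓ : ℕ) : FreeAlgebra.ι ℝ ℓ = (-(((ℓ - 2).factorial : ℕ) : ℝ)) • Xtilde ℓ := by
  unfold Xtilde
  rw [smul_smul]
  have hf : (((ℓ - 2).factorial : ℕ) : ℝ) ≠ 0 := by
    exact_mod_cast (Nat.factorial_pos _).ne'
  rw [show (-(((ℓ - 2).factorial : ℕ) : ℝ)) * (-(1 : ℝ) / ((ℓ - 2).factorial : ℕ)) = 1 by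
    field_simp]
  rw [one_smul]

lemma hfac {k ℓ : ℕ} (h2 : 2 ≤ ℓ) (hkl : ℓ ≤ k) :
    (k.choose ℓ : ℝ) * ((ℓ : ℝ) - 1) * (ℓ : ℝ) * (((ℓ - 2).factorial : ℕ) : ℝ)
      * (((k - ℓ).factorial : ℕ) : ℝ) = (k.factorial : ℕ) := by
  have hnat : k.choose ℓ * ((ℓ - 1) * (ℓ * (ℓ - 2).factorial)) * (k - ℓ).factorial
      = k.factorial := by
    have hl : (ℓ - 1) * (ℓ * (ℓ - 2).factorial) = ℓ.factorial := by
      obtain ⟨m, rfl⟩ : ∃ m, ℓ = m + 2 := ⟨ℓ - 2, by omega⟩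
      simp [Nat.factorial_succ]
      ring
    rw [hl]
    exact Nat.choose_mul_factorial_mul_factorial hkl
  have h1 : ((ℓ : ℝ) - 1) = ((ℓ - 1 : ℕ) : ℝ) := by
    rw [Nat.cast_sub (by omega : 1 ≤ ℓ)]; simp
  rw [h1, ← hnat]
  push_cast
  ring

lemma term_eq {k ℓ : ℕ} (h2 : 2 ≤ ℓ) (hkl : ℓ ≤ k) (h1 : 1 ≤ k) (l : List ℕ)
    (hsum : l.sum = k - ℓ) :
    -(((k.choose ℓ : ℝ) * ((ℓ : ℝ) - 1) * (ℓ : ℝ)) •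
        (FreeAlgebra.ι ℝ ℓ * ((((k - ℓ).factorial : ℝ) / PiI l) • (l.reverse.map Xtilde).prod)))
      = ((k : ℝ) * ((k : ℝ) + 1)) •
          (((k.factorial : ℝ) / PiI (l ++ [ℓ])) • ((l ++ [ℓ]).reverse.map Xtilde).prod) := by
  have hk0 : ((k : ℝ) * ((k : ℝ) + 1)) ≠ 0 := by
    have : (0 : ℝ) < (k : ℝ) := by exact_mod_cast h1
    positivity
  have key := hfac h2 hkl
  set P := (l.reverse.map Xtilde).prod with hP
  have hL : -(((k.choose ℓ : ℝ) * ((ℓ : ℝ) - 1) * (ℓ : ℝ)) •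
        (FreeAlgebra.ι ℝ ℓ * ((((k - ℓ).factorial : ℝ) / PiI l) • P)))
      = ((k.factorial : ℝ) / PiI l) • (Xtilde ℓ * P) := by
    rw [ι_eq ℓ, smul_mul_smul_comm, smul_smul, ← neg_smul]
    congr 1
    rw [show -((k.choose ℓ : ℝ) * ((ℓ : ℝ) - 1) * (ℓ : ℝ)
          * (-(((ℓ - 2).factorial : ℕ) : ℝ) * (((k - ℓ).factorial : ℝ) / PiI l)))
        = ((k.choose ℓ : ℝ) * ((ℓ : ℝ) - 1) * (ℓ : ℝ) * (((ℓ - 2).factorial : ℕ) : ℝ)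
            * (((k - ℓ).factorial : ℕ) : ℝ)) / PiI l by ring]
    rw [key]
  have hR : ((k : ℝ) * ((k : ℝ) + 1)) •
        (((k.factorial : ℝ) / PiI (l ++ [ℓ])) • ((l ++ [ℓ]).reverse.map Xtilde).prod)
      = ((k.factorial : ℝ) / PiI l) • (Xtilde ℓ * P) := by
    rw [PiI_append, hsum, Nat.sub_add_cancel hkl]
    rw [List.reverse_append]
    simp only [List.reverse_singleton, List.singleton_append, List.map_cons, List.prod_cons]
    rw [smul_smul]
    rw [show ((k : ℝ) * ((k : ℝ) + 1)) * ((k.factorial : ℝ)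
          / (PiI l * ((k : ℝ) * ((k : ℝ) + 1))))
        = ((k : ℝ) * ((k : ℝ) + 1)) * ((k.factorial : ℝ)
            / ((k : ℝ) * ((k : ℝ) + 1))) / PiI l by
      rw [mul_comm (PiI l), ← div_div, ← mul_div_assoc]]
    rw [mul_div_cancel₀ _ hk0]
  rw [hL, hR]

end QtildeAux

/-- the solution of the recursion
`Q̃₀ = 1`, `Q̃ₖ = -(1/(k(k+1))) ∑_{ℓ=2}^{k} C(k,ℓ)(ℓ-1)ℓ Xₗ Q̃_{k-ℓ}`
is given by the closed formula
`Q̃ₖ = ∑_{I : deg I = k} (k!/Π_I) X̃_{i_r}⋯X̃_{i₁}`,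
the sum being over all finite sequences `I = (i₁,…,i_r)` of integers `≥ 2` with sum `k`. -/
theorem Qtilde_closed_formula (Qt : ℕ → FreeAlgebra ℝ ℕ)
    (h0 : Qt 0 = 1)
    (hrec : ∀ k : ℕ, 1 ≤ k → ((k : ℝ) * (k + 1)) • Qt k
      = - ∑ ℓ ∈ Finset.Icc 2 k,
          (((k.choose ℓ : ℝ)) * ((ℓ : ℝ) - 1) * (ℓ : ℝ)) • (FreeAlgebra.ι ℝ ℓ * Qt (k - ℓ))) :
    ∀ k : ℕ, 1 ≤ k →
      Qt k = ∑ c ∈ Finset.univ.filter (fun c : Composition k => ∀ i ∈ c.blocks, 2 ≤ i),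
        ((k.factorial : ℝ) / PiI c.blocks) • (c.blocks.reverse.map Xtilde).prod := by
  have main : ∀ k : ℕ, Qt k = QtildeAux.S k := by
    intro k
    induction k using Nat.strong_induction_on with
    | _ k ih =>
      rcases Nat.eq_zero_or_pos k with hk | hk
      · rw [hk, h0, QtildeAux.S_zero]
      · have h1 : 1 ≤ k := hk
        have hk0 : ((k : ℝ) * ((k : ℝ) + 1)) ≠ 0 := by
          have : (0 : ℝ) < (k : ℝ) := by exact_mod_cast h1
          positivity
        apply smul_right_injective (FreeAlgebra ℝ ℕ) hk0
        show ((k : ℝ) * ((k : ℝ) + 1)) • Qt k = ((k : ℝ) * ((k : ℝ) + 1)) • QtildeAux.S k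
        rw [hrec k h1, QtildeAux.S_reindex k h1, Finset.smul_sum, ← Finset.sum_neg_distrib]
        apply Finset.sum_congr rfl
        intro ℓ hℓ
        obtain ⟨hℓ2, hℓk⟩ := Finset.mem_Icc.1 hℓ
        have hq : Qt (k - ℓ) = QtildeAux.S (k - ℓ) := ih _ (by omega)
        rw [hq]
        unfold QtildeAux.S
        rw [Finset.mul_sum, Finset.smul_sum, ← Finset.sum_neg_distrib, Finset.smul_sum]
        apply Finset.sum_congr rfl
        intro c hc
        exact QtildeAux.term_eq hℓ2 hℓk h1 c.blocks c.blocks_sum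
  intro k _
  exact main k
end

section
/- With $Q_k := \sum_{\ell=0}^{k}\binom{k}{\ell}\tilde{Q}_\ell^* \tilde{Q}_{k-\ell}$ as above, for every $k \geq 0$ the coefficient of the generator $X_{k+2}$ in $Q_{k+2}$ equals $-2\frac{k+1}{k+3}$; that is, $Q_{k+2} = -2\frac{k+1}{k+3}X_{k+2} + (\text{a linear combination of words in } X_2,\ldots,X_{k+1} \text{ only})$. -/
/-- in `Q_{k+2} = ∑ₗ C(k+2,ℓ) Q̃ₗ* Q̃_{k+2-ℓ}` the generator `X_{k+2}` occurs
with coefficient `-2(k+1)/(k+3)`, all remaining terms being linear combinations of words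
in `X₂,…,X_{k+1}` only. -/
theorem Q_leading_coefficient (Qt : ℕ → FreeAlgebra ℝ ℕ)
    (h0 : Qt 0 = 1)
    (hrec : ∀ k : ℕ, 1 ≤ k → ((k : ℝ) * (k + 1)) • Qt k
      = - ∑ ℓ ∈ Finset.Icc 2 k,
          (((k.choose ℓ : ℝ)) * ((ℓ : ℝ) - 1) * (ℓ : ℝ)) • (FreeAlgebra.ι ℝ ℓ * Qt (k - ℓ)))
    (s : FreeAlgebra ℝ ℕ →ₗ[ℝ] FreeAlgebra ℝ ℕ)
    (hs1 : s 1 = 1)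
    (hsmul : ∀ a b, s (a * b) = s b * s a)
    (hsgen : ∀ i, s (FreeAlgebra.ι ℝ i) = FreeAlgebra.ι ℝ i) :
    ∀ k : ℕ, ∃ r ∈ Algebra.adjoin ℝ ((FreeAlgebra.ι ℝ) '' (Set.Icc 2 (k + 1))),
      ∑ ℓ ∈ Finset.range (k + 3), ((k + 2).choose ℓ : ℝ) • (s (Qt ℓ) * Qt (k + 2 - ℓ))
        = (-2 * ((k : ℝ) + 1) / ((k : ℝ) + 3)) • FreeAlgebra.ι ℝ (k + 2) + r := by
  have Amono : ∀ {a b : ℕ}, a ≤ b →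
      Algebra.adjoin ℝ ((FreeAlgebra.ι ℝ) '' (Set.Icc 2 a)) ≤
      Algebra.adjoin ℝ ((FreeAlgebra.ι ℝ) '' (Set.Icc 2 b)) := by
    intro a b h
    exact Algebra.adjoin_mono (Set.image_mono (Set.Icc_subset_Icc_right h))
  have hsinv : ∀ (n : ℕ) (x : FreeAlgebra ℝ ℕ),
      x ∈ Algebra.adjoin ℝ ((FreeAlgebra.ι ℝ) '' (Set.Icc 2 n)) →
      s x ∈ Algebra.adjoin ℝ ((FreeAlgebra.ι ℝ) '' (Set.Icc 2 n)) := by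
    intro n x hx
    induction hx using Algebra.adjoin_induction with
    | mem y hy =>
      obtain ⟨i, hi, rfl⟩ := hy
      rw [hsgen]
      exact Algebra.subset_adjoin ⟨i, hi, rfl⟩
    | algebraMap r =>
      rw [Algebra.algebraMap_eq_smul_one, map_smul, hs1]
      exact Subalgebra.smul_mem _ (one_mem _) r
    | add a b ha hb iha ihb =>
      rw [map_add]; exact add_mem iha ihb
    | mul a b ha hb iha ihb =>
      rw [hsmul]; exact mul_mem ihb iha
  -- Qt 1 = 0
  have hQt1 : Qt 1 = 0 := by
    have h := hrec 1 le_rfl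
    rw [show Finset.Icc 2 1 = (∅ : Finset ℕ) from rfl] at h
    simpa using h
  -- key decomposition
  have key : ∀ m : ℕ, 1 ≤ m →
      ∃ r ∈ Algebra.adjoin ℝ ((FreeAlgebra.ι ℝ) '' (Set.Icc 2 (m - 1))),
        Qt m = (-(((m : ℝ) - 1) / ((m : ℝ) + 1))) • FreeAlgebra.ι ℝ m + r := by
    intro m
    induction m using Nat.strong_induction_on with
    | _ m IH =>
      intro hm
      have memA : ∀ j n, j < m → j ≤ n →
          Qt j ∈ Algebra.adjoin ℝ ((FreeAlgebra.ι ℝ) '' (Set.Icc 2 n)) := by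
        intro j n hj hjn
        match j with
        | 0 => rw [h0]; exact one_mem _
        | 1 => rw [hQt1]; exact zero_mem _
        | (j + 2) =>
          obtain ⟨r, hr, hQ⟩ := IH (j + 2) hj (by omega)
          rw [hQ]
          refine add_mem (Subalgebra.smul_mem _ ?_ _) (Amono (by omega) hr)
          exact Algebra.subset_adjoin ⟨j + 2, ⟨by omega, by omega⟩, rfl⟩
      match m with
      | 1 =>
        refine ⟨0, zero_mem _, ?_⟩
        rw [hQt1]
        norm_num
      | (n + 2) =>
        have hrm := hrec (n + 2) (by omega)
        have hsplit : Finset.Icc 2 (n + 2) = insert (n + 2) (Finset.Icc 2 (n + 1)) := by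
          ext x
          simp only [Finset.mem_Icc, Finset.mem_insert]
          omega
        rw [hsplit, Finset.sum_insert (by simp)] at hrm
        simp only [Nat.choose_self, Nat.sub_self, h0, mul_one, Nat.cast_one, one_mul] at hrm
        set T : FreeAlgebra ℝ ℕ := ∑ ℓ ∈ Finset.Icc 2 (n + 1),
          ((((n + 2).choose ℓ : ℝ)) * ((ℓ : ℝ) - 1) * (ℓ : ℝ)) •
            (FreeAlgebra.ι ℝ ℓ * Qt (n + 2 - ℓ)) with hT
        have hTmem : T ∈ Algebra.adjoin ℝ ((FreeAlgebra.ι ℝ) '' (Set.Icc 2 (n + 1))) := by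
          rw [hT]
          refine sum_mem fun ℓ hℓ => ?_
          simp only [Finset.mem_Icc] at hℓ
          refine Subalgebra.smul_mem _ (mul_mem ?_ ?_) _
          · exact Algebra.subset_adjoin ⟨ℓ, ⟨hℓ.1, hℓ.2⟩, rfl⟩
          · exact memA (n + 2 - ℓ) (n + 1) (by omega) (by omega)
        have ha : (((n : ℝ) + 2) * ((n : ℝ) + 3)) ≠ 0 := by positivity
        have hrm' : (((n : ℝ) + 2) * ((n : ℝ) + 3)) • Qt (n + 2)
            = (-(((n : ℝ) + 1) * ((n : ℝ) + 2))) • FreeAlgebra.ι ℝ (n + 2) + (-1 : ℝ) • T := by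
          rw [neg_add] at hrm
          push_cast at hrm ⊢
          rw [show ((n : ℝ) + 2) * ((n : ℝ) + 3) = (n + 2 : ℝ) * ((n + 2 : ℝ) + 1) by ring, hrm]
          rw [neg_one_smul, show ((n : ℝ) + 2 - 1) = (n : ℝ) + 1 by ring, neg_smul]
        refine ⟨(((n : ℝ) + 2) * ((n : ℝ) + 3))⁻¹ • ((-1 : ℝ) • T), Subalgebra.smul_mem _
          (Subalgebra.smul_mem _ hTmem _) _, ?_⟩
        have : Qt (n + 2) = (((n : ℝ) + 2) * ((n : ℝ) + 3))⁻¹ •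
            ((-(((n : ℝ) + 1) * ((n : ℝ) + 2))) • FreeAlgebra.ι ℝ (n + 2) + (-1 : ℝ) • T) := by
          rw [← hrm', inv_smul_smul₀ ha]
        rw [this, smul_add, smul_smul]
        congr 2
        push_cast
        field_simp
        ring
  -- global membership
  have memA : ∀ j n : ℕ, j ≤ n →
      Qt j ∈ Algebra.adjoin ℝ ((FreeAlgebra.ι ℝ) '' (Set.Icc 2 n)) := by
    intro j n hjn
    match j with
    | 0 => rw [h0]; exact one_mem _
    | 1 => rw [hQt1]; exact zero_mem _
    | (j + 2) =>
      obtain ⟨r, hr, hQ⟩ := key (j + 2) (by omega)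
      rw [hQ]
      refine add_mem (Subalgebra.smul_mem _ ?_ _) (Amono (by omega) hr)
      exact Algebra.subset_adjoin ⟨j + 2, ⟨by omega, by omega⟩, rfl⟩
  intro k
  obtain ⟨r, hr, hQ⟩ := key (k + 2) (by omega)
  have hr' : r ∈ Algebra.adjoin ℝ ((FreeAlgebra.ι ℝ) '' (Set.Icc 2 (k + 1))) := hr
  -- split the sum
  rw [Finset.sum_range_succ', show k + 2 = (k + 1) + 1 from rfl, Finset.sum_range_succ]
  have hmid : (∑ i ∈ Finset.range (k + 1),
      ((k + 2).choose (i + 1) : ℝ) • (s (Qt (i + 1)) * Qt (k + 2 - (i + 1))))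
      ∈ Algebra.adjoin ℝ ((FreeAlgebra.ι ℝ) '' (Set.Icc 2 (k + 1))) := by
    refine sum_mem fun i hi => ?_
    simp only [Finset.mem_range] at hi
    refine Subalgebra.smul_mem _ (mul_mem ?_ ?_) _
    · exact hsinv _ _ (memA (i + 1) (k + 1) (by omega))
    · exact memA (k + 2 - (i + 1)) (k + 1) (by omega)
  set M : FreeAlgebra ℝ ℕ := ∑ i ∈ Finset.range (k + 1),
      ((k + 2).choose (i + 1) : ℝ) • (s (Qt (i + 1)) * Qt (k + 2 - (i + 1))) with hM
  have hlast : ((k + 2).choose (k + 1 + 1) : ℝ) • (s (Qt (k + 1 + 1)) * Qt (k + 2 - (k + 1 + 1)))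
      = s (Qt (k + 2)) := by
    rw [show k + 1 + 1 = k + 2 from rfl, Nat.choose_self, Nat.sub_self, h0, mul_one]
    simp
  have hfirst : ((k + 2).choose 0 : ℝ) • (s (Qt 0) * Qt (k + 2 - 0)) = Qt (k + 2) := by
    rw [h0, hs1, Nat.choose_zero_right, one_mul]
    simp
  rw [hlast, hfirst]
  have hsQ : s (Qt (k + 2)) = (-((((k + 2 : ℕ) : ℝ) - 1) / (((k + 2 : ℕ) : ℝ) + 1))) •
      FreeAlgebra.ι ℝ (k + 2) + s r := by
    rw [hQ, map_add, map_smul, hsgen]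
  refine ⟨M + r + s r, add_mem (add_mem hmid hr') (hsinv _ _ hr'), ?_⟩
  rw [hsQ, hQ]
  have hc : (-2 * ((k : ℝ) + 1) / ((k : ℝ) + 3))
      = (-((((k + 2 : ℕ) : ℝ) - 1) / (((k + 2 : ℕ) : ℝ) + 1)))
        + (-((((k + 2 : ℕ) : ℝ) - 1) / (((k + 2 : ℕ) : ℝ) + 1))) := by
    push_cast
    have : (k : ℝ) + 3 ≠ 0 := by positivity
    field_simp
    ring
  rw [hc, add_smul]
  abel
end
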